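/- Let q1, q2 > 0 with 1 < 1/(2q1) + 3/(2q2) and q2 ≠ 3/2, and assume Q := 1/q1 + 1/q2 < 1. Then there is a constant C such that for all μ ≥ 2, ∫₀^∞ ∫₀^∞ ( ∫₀^1 ∫₁^μ ρ(t+u, s+v) ds dt )² dv du ≤ C μ^{3 + q2/q1 − 2q2}, where ρ(t,s) = (|t|^{q1} + |s|^{q2})^{-1}. -/

import Mathlib

open MeasureTheory Real Set
open scoped ENNReal

noncomputable def rho (q1 q2 t s : ℝ) : ℝ := (|t| ^ q1 + |s| ^ q2)⁻¹

noncomputable def gg (q1 q2 s u v : ℝ) : ℝ≥0∞ := ENNReal.ofReal ((u ^ q1 + (s + v) ^ q2)⁻¹)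






lemma ofReal_int_le {α : Type*} [MeasurableSpace α] (μ : Measure α) (f : α → ℝ)
    (hf : 0 ≤ᵐ[μ] f) :
    ENNReal.ofReal (∫ x, f x ∂μ) ≤ ∫⁻ x, ENNReal.ofReal (f x) ∂μ := by
  by_cases h : Integrable f μ
  · exact (MeasureTheory.ofReal_integral_eq_lintegral_ofReal h hf).le
  · rw [MeasureTheory.integral_undef h]; simp

lemma lint_Ioi_rpow {c p : ℝ} (hc : 0 < c) (hp : p < -1) :
    ∫⁻ x in Ioi c, ENNReal.ofReal (x ^ p) = ENNReal.ofReal (-c ^ (p + 1) / (p + 1)) := by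
  rw [← integral_Ioi_rpow_of_lt hp hc,
    MeasureTheory.ofReal_integral_eq_lintegral_ofReal (integrableOn_Ioi_rpow_of_lt hp hc)
      ((ae_restrict_mem measurableSet_Ioi).mono fun x hx => Real.rpow_nonneg (hc.trans hx).le p)]

lemma lint_Ioc_rpow {m r : ℝ} (hm : 1 ≤ m) (hr : -1 < r) :
    ∫⁻ s in Ioc 1 m, ENNReal.ofReal (s ^ r) = ENNReal.ofReal ((m ^ (r + 1) - 1) / (r + 1)) := by
  have hint : IntegrableOn (fun s : ℝ => s ^ r) (Ioc 1 m) := by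
    have h := intervalIntegral.intervalIntegrable_rpow' (a := 1) (b := m) hr
    rwa [intervalIntegrable_iff_integrableOn_Ioc_of_le hm] at h
  rw [← MeasureTheory.ofReal_integral_eq_lintegral_ofReal hint
      ((ae_restrict_mem measurableSet_Ioc).mono fun x hx =>
        Real.rpow_nonneg (by linarith [hx.1] : (0:ℝ) ≤ x) r)]
  congr 1
  rw [← intervalIntegral.integral_of_le hm, integral_rpow (Or.inl hr)]
  norm_num

lemma split_bound {f : ℝ → ℝ≥0∞} {T c1 c2 p : ℝ} (hT : 0 < T) (hc1 : 0 ≤ c1) (hc2 : 0 ≤ c2)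
    (hp : p < -1)
    (h1 : ∀ v ∈ Ioc (0:ℝ) T, f v ≤ ENNReal.ofReal c1)
    (h2 : ∀ v ∈ Ioi T, f v ≤ ENNReal.ofReal (c2 * v ^ p)) :
    ∫⁻ v in Ioi (0:ℝ), f v ≤ ENNReal.ofReal (c1 * T + c2 * (-T ^ (p + 1) / (p + 1))) := by
  have hdisj : Disjoint (Ioc (0:ℝ) T) (Ioi T) :=
    Set.disjoint_left.mpr fun x hx hx' => absurd hx.2 (not_le.mpr hx')
  have hsplit : ∫⁻ v in Ioi (0:ℝ), f v
      = (∫⁻ v in Ioc (0:ℝ) T, f v) + ∫⁻ v in Ioi T, f v := by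
    rw [← lintegral_union measurableSet_Ioi hdisj, Ioc_union_Ioi_eq_Ioi hT.le]
  rw [hsplit]
  have hpiece1 : ∫⁻ v in Ioc (0:ℝ) T, f v ≤ ENNReal.ofReal (c1 * T) := by
    calc ∫⁻ v in Ioc (0:ℝ) T, f v ≤ ∫⁻ _ in Ioc (0:ℝ) T, ENNReal.ofReal c1 :=
          lintegral_mono_ae ((ae_restrict_mem measurableSet_Ioc).mono h1)
      _ = ENNReal.ofReal c1 * ENNReal.ofReal T := by
          rw [setLIntegral_const, Real.volume_Ioc, sub_zero]
      _ = ENNReal.ofReal (c1 * T) := (ENNReal.ofReal_mul hc1).symm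
  have hpiece2 : ∫⁻ v in Ioi T, f v ≤ ENNReal.ofReal (c2 * (-T ^ (p + 1) / (p + 1))) := by
    calc ∫⁻ v in Ioi T, f v ≤ ∫⁻ v in Ioi T, ENNReal.ofReal c2 * ENNReal.ofReal (v ^ p) := by
          refine lintegral_mono_ae ((ae_restrict_mem measurableSet_Ioi).mono fun v hv => ?_)
          rw [← ENNReal.ofReal_mul hc2]; exact h2 v hv
      _ = ENNReal.ofReal c2 * ENNReal.ofReal (-T ^ (p + 1) / (p + 1)) := by
          rw [lintegral_const_mul' _ _ ENNReal.ofReal_ne_top, lint_Ioi_rpow hT hp]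
      _ = ENNReal.ofReal (c2 * (-T ^ (p + 1) / (p + 1))) := (ENNReal.ofReal_mul hc2).symm
  calc (∫⁻ v in Ioc (0:ℝ) T, f v) + ∫⁻ v in Ioi T, f v
      ≤ ENNReal.ofReal (c1 * T) + ENNReal.ofReal (c2 * (-T ^ (p + 1) / (p + 1))) :=
        add_le_add hpiece1 hpiece2
    _ = ENNReal.ofReal (c1 * T + c2 * (-T ^ (p + 1) / (p + 1))) := by
        rw [← ENNReal.ofReal_add (by positivity) ?_]
        have hTp : 0 < T ^ (p + 1) := Real.rpow_pos_of_pos hT _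
        have : 0 ≤ -T ^ (p + 1) / (p + 1) :=
          (div_pos_of_neg_of_neg (by linarith) (by linarith)).le
        positivity



lemma rpow_sq (x c : ℝ) (hx : 0 ≤ x) : (x ^ c) ^ (2:ℕ) = x ^ (2*c) := by
  rw [← Real.rpow_natCast (x ^ c) 2, ← Real.rpow_mul hx]
  congr 1
  push_cast
  ring

lemma gg_sq_le {q1 q2 s u v y : ℝ} (hy : 0 ≤ y) (hxy : (u ^ q1 + (s + v) ^ q2)⁻¹ ≤ y) :
    gg q1 q2 s u v ^ 2 ≤ ENNReal.ofReal (y ^ (2:ℕ)) := by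
  calc gg q1 q2 s u v ^ 2 ≤ ENNReal.ofReal y ^ 2 := by
        unfold gg; exact pow_le_pow_left' (ENNReal.ofReal_le_ofReal hxy) 2
    _ = ENNReal.ofReal (y ^ (2:ℕ)) := (ENNReal.ofReal_pow hy 2).symm

lemma x_le_tail {q1 q2 s u v : ℝ} (hq2 : 0 < q2) (hu : 0 ≤ u) (hs : 0 < s) (hv : 0 < v) :
    (u ^ q1 + (s + v) ^ q2)⁻¹ ≤ v ^ (-q2) := by
  have h1 : (0:ℝ) < v ^ q2 := Real.rpow_pos_of_pos hv _
  have h2 : v ^ q2 ≤ u ^ q1 + (s + v) ^ q2 := by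
    have := Real.rpow_le_rpow hv.le (by linarith : v ≤ s + v) hq2.le
    have hun : (0:ℝ) ≤ u ^ q1 := Real.rpow_nonneg hu _
    linarith
  rw [Real.rpow_neg hv.le]
  exact inv_anti₀ h1 h2

lemma stepD1 {q1 q2 s u : ℝ} (hq1 : 0 < q1) (hq2 : 1 < q2) (hs : 1 ≤ s) (hu : 0 < u) :
    ∫⁻ v in Ioi (0:ℝ), gg q1 q2 s u v ^ 2
      ≤ ENNReal.ofReal ((1 + 1/(2*q2-1)) * min (s ^ (1-2*q2)) (u ^ (q1/q2 - 2*q1))) := by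
  have hs0 : (0:ℝ) < s := lt_of_lt_of_le one_pos hs
  have hq2' : (0:ℝ) < q2 := by linarith
  have hp : -(2*q2) < -1 := by linarith
  have hne1 : (2*q2 - 1) ≠ 0 := ne_of_gt (by linarith)
  have hne2 : -(2*q2) + 1 ≠ 0 := ne_of_lt (by linarith)
  have hB1 : ∫⁻ v in Ioi (0:ℝ), gg q1 q2 s u v ^ 2
      ≤ ENNReal.ofReal ((1 + 1/(2*q2-1)) * s ^ (1-2*q2)) := by
    have h := split_bound (f := fun v => gg q1 q2 s u v ^ 2) (T := s)
      (c1 := s ^ (-(2*q2))) (c2 := 1) (p := -(2*q2)) hs0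
      (Real.rpow_nonneg hs0.le _) zero_le_one hp
      (fun v hv => by
        have hxy : (u ^ q1 + (s + v) ^ q2)⁻¹ ≤ s ^ (-q2) := by
          have h1 : (0:ℝ) < s ^ q2 := Real.rpow_pos_of_pos hs0 _
          have h2 : s ^ q2 ≤ u ^ q1 + (s + v) ^ q2 := by
            have := Real.rpow_le_rpow hs0.le (by linarith [hv.1] : s ≤ s + v) hq2'.le
            have hun : (0:ℝ) ≤ u ^ q1 := Real.rpow_nonneg hu.le _
            linarith
          rw [Real.rpow_neg hs0.le]
          exact inv_anti₀ h1 h2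
        have := gg_sq_le (Real.rpow_nonneg hs0.le _) hxy
        rwa [rpow_sq s (-q2) hs0.le, show 2 * -q2 = -(2*q2) by ring] at this)
      (fun v hv => by
        have hv0 : (0:ℝ) < v := lt_trans hs0 hv
        show gg q1 q2 s u v ^ 2 ≤ ENNReal.ofReal (1 * v ^ (-(2*q2)))
        rw [one_mul]
        have := gg_sq_le (q1 := q1) (Real.rpow_nonneg hv0.le _) (x_le_tail (q1 := q1) hq2' hu.le hs0 hv0)
        rwa [rpow_sq v (-q2) hv0.le, show 2 * -q2 = -(2*q2) by ring] at this)
    apply h.trans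
    apply le_of_eq
    congr 1
    have h1 : s ^ (-(2*q2)) * s = s ^ (1-2*q2) := by
      rw [← Real.rpow_add_one hs0.ne']
      congr 1; ring
    have h2 : s ^ (-(2*q2) + 1) = s ^ (1-2*q2) := by congr 1; ring
    rw [h1, h2]
    field_simp
    ring
  have hB2 : ∫⁻ v in Ioi (0:ℝ), gg q1 q2 s u v ^ 2
      ≤ ENNReal.ofReal ((1 + 1/(2*q2-1)) * u ^ (q1/q2 - 2*q1)) := by
    have hT : (0:ℝ) < u ^ (q1/q2) := Real.rpow_pos_of_pos hu _
    have h := split_bound (f := fun v => gg q1 q2 s u v ^ 2) (T := u ^ (q1/q2))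
      (c1 := u ^ (-(2*q1))) (c2 := 1) (p := -(2*q2)) hT
      (Real.rpow_nonneg hu.le _) zero_le_one hp
      (fun v hv => by
        have hxy : (u ^ q1 + (s + v) ^ q2)⁻¹ ≤ u ^ (-q1) := by
          have h1 : (0:ℝ) < u ^ q1 := Real.rpow_pos_of_pos hu _
          have h2 : u ^ q1 ≤ u ^ q1 + (s + v) ^ q2 := by
            have : (0:ℝ) ≤ (s + v) ^ q2 := Real.rpow_nonneg (by linarith [hv.1] : (0:ℝ) ≤ s + v) _
            linarith
          rw [Real.rpow_neg hu.le]
          exact inv_anti₀ h1 h2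
        have := gg_sq_le (Real.rpow_nonneg hu.le _) hxy
        rwa [rpow_sq u (-q1) hu.le, show 2 * -q1 = -(2*q1) by ring] at this)
      (fun v hv => by
        have hv0 : (0:ℝ) < v := lt_trans hT hv
        show gg q1 q2 s u v ^ 2 ≤ ENNReal.ofReal (1 * v ^ (-(2*q2)))
        rw [one_mul]
        have := gg_sq_le (q1 := q1) (Real.rpow_nonneg hv0.le _) (x_le_tail (q1 := q1) hq2' hu.le hs0 hv0)
        rwa [rpow_sq v (-q2) hv0.le, show 2 * -q2 = -(2*q2) by ring] at this)
    apply h.trans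
    apply le_of_eq
    congr 1
    have h1 : u ^ (-(2*q1)) * u ^ (q1/q2) = u ^ (q1/q2 - 2*q1) := by
      rw [← Real.rpow_add hu]; congr 1; ring
    have h2 : (u ^ (q1/q2)) ^ (-(2*q2) + 1) = u ^ (q1/q2 - 2*q1) := by
      rw [← Real.rpow_mul hu.le]; congr 1; field_simp; ring
    rw [h1, h2]
    rw [show -(2*q2)+1 = -(2*q2-1) by ring, div_neg, neg_div, neg_neg]
    ring
  rcases le_total (s ^ (1-2*q2)) (u ^ (q1/q2 - 2*q1)) with hmin | hmin
  · rw [min_eq_left hmin]; exact hB1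
  · rw [min_eq_right hmin]; exact hB2

lemma stepD {q1 q2 s : ℝ} (hq1 : 1 < q1) (hq2 : 1 < q2) (hp1 : q1/q2 - 2*q1 < -1) (hs : 1 ≤ s) :
    ∫⁻ u in Ioi (0:ℝ), ∫⁻ v in Ioi (0:ℝ), gg q1 q2 s u v ^ 2
      ≤ ENNReal.ofReal ((1 + 1/(2*q2-1)) * (1 + 1/(2*q1 - q1/q2 - 1)) * s ^ (1 - 2*q2 + q2/q1)) := by
  have hs0 : (0:ℝ) < s := lt_of_lt_of_le one_pos hs
  have hq1' : (0:ℝ) < q1 := by linarith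
  have hq2' : (0:ℝ) < q2 := by linarith
  have hcb : (0:ℝ) < 1 + 1/(2*q2-1) := by
    have h : (0:ℝ) < 2*q2 - 1 := by linarith
    positivity
  have hT : (0:ℝ) < s ^ (q2/q1) := Real.rpow_pos_of_pos hs0 _
  have h := split_bound (f := fun u => ∫⁻ v in Ioi (0:ℝ), gg q1 q2 s u v ^ 2)
    (T := s ^ (q2/q1)) (c1 := (1 + 1/(2*q2-1)) * s ^ (1-2*q2)) (c2 := 1 + 1/(2*q2-1))
    (p := q1/q2 - 2*q1) hT
    (by positivity) hcb.le hp1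
    (fun u hu => by
      show ∫⁻ v in Ioi (0:ℝ), gg q1 q2 s u v ^ 2 ≤ _
      refine (stepD1 hq1' hq2 hs hu.1).trans (ENNReal.ofReal_le_ofReal ?_)
      exact mul_le_mul_of_nonneg_left (min_le_left _ _) hcb.le)
    (fun u hu => by
      show ∫⁻ v in Ioi (0:ℝ), gg q1 q2 s u v ^ 2 ≤ _
      refine (stepD1 hq1' hq2 hs (lt_trans hT hu)).trans (ENNReal.ofReal_le_ofReal ?_)
      exact mul_le_mul_of_nonneg_left (min_le_right _ _) hcb.le)
  apply h.trans
  apply le_of_eq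
  congr 1
  have hT1 : (s ^ (q2/q1)) ^ (q1/q2 - 2*q1 + 1) = s ^ (1 - 2*q2 + q2/q1) := by
    rw [← Real.rpow_mul hs0.le]
    congr 1
    field_simp
  have hT2 : s ^ (1-2*q2) * s ^ (q2/q1) = s ^ (1 - 2*q2 + q2/q1) := by
    rw [← Real.rpow_add hs0]
  rw [mul_assoc ((1:ℝ) + 1/(2*q2-1)) (s ^ (1-2*q2)) (s ^ (q2/q1)), hT2, hT1,
    show q1/q2 - 2*q1 + 1 = -(2*q1 - q1/q2 - 1) by ring, div_neg, neg_div, neg_neg]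
  ring




lemma stepA {q1 q2 u v m : ℝ} (hq1 : 0 < q1) (hq2 : 0 < q2) (hu : 0 < u) (hv : 0 < v) :
    ENNReal.ofReal ((∫ t in Ioc (0:ℝ) 1, ∫ s in Ioc (1:ℝ) m, rho q1 q2 (t + u) (s + v)) ^ 2)
      ≤ (∫⁻ s in Ioc (1:ℝ) m, gg q1 q2 s u v) ^ 2 := by
  have hrho : ∀ t s : ℝ, 0 ≤ rho q1 q2 t s := fun t s => by
    unfold rho; positivity
  have hA0 : 0 ≤ ∫ t in Ioc (0:ℝ) 1, ∫ s in Ioc (1:ℝ) m, rho q1 q2 (t + u) (s + v) :=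
    integral_nonneg fun t => integral_nonneg fun s => hrho _ _
  rw [ENNReal.ofReal_pow hA0]
  apply pow_le_pow_left' ?_ 2
  calc ENNReal.ofReal (∫ t in Ioc (0:ℝ) 1, ∫ s in Ioc (1:ℝ) m, rho q1 q2 (t + u) (s + v))
      ≤ ∫⁻ t in Ioc (0:ℝ) 1, ENNReal.ofReal (∫ s in Ioc (1:ℝ) m, rho q1 q2 (t + u) (s + v)) :=
        ofReal_int_le _ _ (Filter.Eventually.of_forall fun t => integral_nonneg fun s => hrho _ _)
    _ ≤ ∫⁻ _ in Ioc (0:ℝ) 1, ∫⁻ s in Ioc (1:ℝ) m, gg q1 q2 s u v := by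
        refine lintegral_mono_ae ((ae_restrict_mem measurableSet_Ioc).mono fun t ht => ?_)
        calc ENNReal.ofReal (∫ s in Ioc (1:ℝ) m, rho q1 q2 (t + u) (s + v))
            ≤ ∫⁻ s in Ioc (1:ℝ) m, ENNReal.ofReal (rho q1 q2 (t + u) (s + v)) :=
              ofReal_int_le _ _ (Filter.Eventually.of_forall fun s => hrho _ _)
          _ ≤ ∫⁻ s in Ioc (1:ℝ) m, gg q1 q2 s u v := by
              refine lintegral_mono_ae ((ae_restrict_mem measurableSet_Ioc).mono fun s hs => ?_)
              apply ENNReal.ofReal_le_ofReal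
              unfold rho
              have h1 : (0:ℝ) < t + u := by linarith [ht.1]
              have h2 : (0:ℝ) < s + v := by linarith [hs.1]
              rw [abs_of_pos h1, abs_of_pos h2]
              apply inv_anti₀
              · have ha : (0:ℝ) < u ^ q1 := Real.rpow_pos_of_pos hu _
                have hb : (0:ℝ) ≤ (s + v) ^ q2 := Real.rpow_nonneg h2.le _
                linarith
              · have := Real.rpow_le_rpow hu.le (by linarith [ht.1] : u ≤ t + u) hq1.le
                linarith
    _ = ∫⁻ s in Ioc (1:ℝ) m, gg q1 q2 s u v := by
        rw [setLIntegral_const, Real.volume_Ioc]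
        norm_num

lemma stepB (q1 q2 u v m β : ℝ) :
    (∫⁻ s in Ioc (1:ℝ) m, gg q1 q2 s u v) ^ 2
      ≤ (∫⁻ s in Ioc (1:ℝ) m, ENNReal.ofReal (s ^ (-β)))
        * ∫⁻ s in Ioc (1:ℝ) m, ENNReal.ofReal (s ^ β) * gg q1 q2 s u v ^ 2 := by
  set f : ℝ → ℝ≥0∞ := fun s => ENNReal.ofReal (s ^ (-β/2)) with hf_def
  set g : ℝ → ℝ≥0∞ := fun s => ENNReal.ofReal (s ^ (β/2)) * gg q1 q2 s u v with hg_def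
  have hf : AEMeasurable f (volume.restrict (Ioc 1 m)) := by
    apply Measurable.aemeasurable; rw [hf_def]; fun_prop
  have hg : AEMeasurable g (volume.restrict (Ioc 1 m)) := by
    apply Measurable.aemeasurable; rw [hg_def]; unfold gg; fun_prop
  have hpq : Real.HolderConjugate 2 2 := Real.HolderConjugate.two_two
  have key := ENNReal.lintegral_mul_le_Lp_mul_Lq (volume.restrict (Ioc 1 m)) hpq hf hg
  have h1 : ∫⁻ s in Ioc (1:ℝ) m, (f * g) s = ∫⁻ s in Ioc (1:ℝ) m, gg q1 q2 s u v := by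
    refine lintegral_congr_ae ((ae_restrict_mem measurableSet_Ioc).mono fun s hs => ?_)
    have hs0 : (0:ℝ) < s := lt_trans one_pos hs.1
    show f s * g s = _
    rw [hf_def, hg_def]
    simp only []
    rw [← mul_assoc, ← ENNReal.ofReal_mul (Real.rpow_nonneg hs0.le _), ← Real.rpow_add hs0,
      show -β/2 + β/2 = 0 by ring, Real.rpow_zero, ENNReal.ofReal_one, one_mul]
  have h2 : ∫⁻ s in Ioc (1:ℝ) m, f s ^ (2:ℝ) = ∫⁻ s in Ioc (1:ℝ) m, ENNReal.ofReal (s ^ (-β)) := by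
    refine lintegral_congr_ae ((ae_restrict_mem measurableSet_Ioc).mono fun s hs => ?_)
    have hs0 : (0:ℝ) < s := lt_trans one_pos hs.1
    rw [hf_def]
    simp only []
    rw [ENNReal.ofReal_rpow_of_nonneg (Real.rpow_nonneg hs0.le _) (by norm_num : (0:ℝ) ≤ 2),
      ← Real.rpow_mul hs0.le, show -β/2 * 2 = -β by ring]
  have h3 : ∫⁻ s in Ioc (1:ℝ) m, g s ^ (2:ℝ)
      = ∫⁻ s in Ioc (1:ℝ) m, ENNReal.ofReal (s ^ β) * gg q1 q2 s u v ^ 2 := by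
    refine lintegral_congr_ae ((ae_restrict_mem measurableSet_Ioc).mono fun s hs => ?_)
    have hs0 : (0:ℝ) < s := lt_trans one_pos hs.1
    rw [hg_def]
    simp only []
    rw [ENNReal.mul_rpow_of_nonneg _ _ (by norm_num : (0:ℝ) ≤ 2),
      ENNReal.ofReal_rpow_of_nonneg (Real.rpow_nonneg hs0.le _) (by norm_num : (0:ℝ) ≤ 2),
      ← Real.rpow_mul hs0.le, show β/2 * 2 = β by ring,
      show ((2:ℝ)) = ((2:ℕ):ℝ) by norm_num, ENNReal.rpow_natCast]
  have alg : ∀ X Y : ℝ≥0∞, (X ^ ((1:ℝ)/2) * Y ^ ((1:ℝ)/2)) ^ (2:ℕ) = X * Y := by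
    intro X Y
    rw [mul_pow, ← ENNReal.rpow_natCast (X ^ ((1:ℝ)/2)) 2, ← ENNReal.rpow_mul,
      ← ENNReal.rpow_natCast (Y ^ ((1:ℝ)/2)) 2, ← ENNReal.rpow_mul]
    norm_num
  calc (∫⁻ s in Ioc (1:ℝ) m, gg q1 q2 s u v) ^ 2
      = (∫⁻ s in Ioc (1:ℝ) m, (f * g) s) ^ 2 := by rw [h1]
    _ ≤ ((∫⁻ s in Ioc (1:ℝ) m, f s ^ (2:ℝ)) ^ ((1:ℝ)/2)
          * (∫⁻ s in Ioc (1:ℝ) m, g s ^ (2:ℝ)) ^ ((1:ℝ)/2)) ^ (2:ℕ) :=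
        pow_le_pow_left' key 2
    _ = (∫⁻ s in Ioc (1:ℝ) m, f s ^ (2:ℝ)) * (∫⁻ s in Ioc (1:ℝ) m, g s ^ (2:ℝ)) := alg _ _
    _ = _ := by rw [h2, h3]

lemma swap3 (q1 q2 c m : ℝ) :
    ∫⁻ u in Ioi (0:ℝ), ∫⁻ v in Ioi (0:ℝ), ∫⁻ s in Ioc (1:ℝ) m,
        ENNReal.ofReal (s ^ c) * gg q1 q2 s u v ^ 2
      = ∫⁻ s in Ioc (1:ℝ) m, ENNReal.ofReal (s ^ c)
          * ∫⁻ u in Ioi (0:ℝ), ∫⁻ v in Ioi (0:ℝ), gg q1 q2 s u v ^ 2 := by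
  have hbase : Measurable fun p : ℝ × ℝ × ℝ =>
      ENNReal.ofReal (p.1 ^ c) * gg q1 q2 p.1 p.2.1 p.2.2 ^ 2 := by
    unfold gg; fun_prop
  have swap_vs : ∀ u : ℝ,
      (∫⁻ v in Ioi (0:ℝ), ∫⁻ s in Ioc (1:ℝ) m, ENNReal.ofReal (s ^ c) * gg q1 q2 s u v ^ 2)
      = ∫⁻ s in Ioc (1:ℝ) m, ∫⁻ v in Ioi (0:ℝ), ENNReal.ofReal (s ^ c) * gg q1 q2 s u v ^ 2 :=
    fun u => lintegral_lintegral_swap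
      ((hbase.comp (measurable_snd.prodMk (measurable_const.prodMk measurable_fst))).aemeasurable)
  have hinner : Measurable fun p : ℝ × ℝ =>
      ∫⁻ v in Ioi (0:ℝ), ENNReal.ofReal (p.2 ^ c) * gg q1 q2 p.2 p.1 v ^ 2 :=
    Measurable.lintegral_prod_right'
      (f := fun q : (ℝ × ℝ) × ℝ => ENNReal.ofReal (q.1.2 ^ c) * gg q1 q2 q.1.2 q.1.1 q.2 ^ 2)
      (hbase.comp ((measurable_fst.snd).prodMk ((measurable_fst.fst).prodMk measurable_snd)))
  calc ∫⁻ u in Ioi (0:ℝ), ∫⁻ v in Ioi (0:ℝ), ∫⁻ s in Ioc (1:ℝ) m,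
        ENNReal.ofReal (s ^ c) * gg q1 q2 s u v ^ 2
      = ∫⁻ u in Ioi (0:ℝ), ∫⁻ s in Ioc (1:ℝ) m, ∫⁻ v in Ioi (0:ℝ),
          ENNReal.ofReal (s ^ c) * gg q1 q2 s u v ^ 2 := lintegral_congr swap_vs
    _ = ∫⁻ s in Ioc (1:ℝ) m, ∫⁻ u in Ioi (0:ℝ), ∫⁻ v in Ioi (0:ℝ),
          ENNReal.ofReal (s ^ c) * gg q1 q2 s u v ^ 2 :=
        lintegral_lintegral_swap hinner.aemeasurable
    _ = ∫⁻ s in Ioc (1:ℝ) m, ENNReal.ofReal (s ^ c)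
          * ∫⁻ u in Ioi (0:ℝ), ∫⁻ v in Ioi (0:ℝ), gg q1 q2 s u v ^ 2 := by
        refine lintegral_congr fun s => ?_
        rw [← lintegral_const_mul' _ _ ENNReal.ofReal_ne_top]
        exact lintegral_congr fun u => lintegral_const_mul' _ _ ENNReal.ofReal_ne_top
theorem stmt_10 (q1 q2 : ℝ) (hq1 : 0 < q1) (hq2 : 0 < q2)
    (hQ : 1 / q1 + 1 / q2 < 1)
    (h1 : 1 < 1 / (2 * q1) + 3 / (2 * q2)) (h2 : q2 ≠ 3 / 2) :
    ∃ C : ℝ, ∀ μ : ℝ, 2 ≤ μ →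
      ∫⁻ u in Ioi (0 : ℝ), ∫⁻ v in Ioi (0 : ℝ),
        ENNReal.ofReal ((∫ t in Ioc (0 : ℝ) 1, ∫ s in Ioc (1 : ℝ) μ,
          rho q1 q2 (t + u) (s + v)) ^ 2)
        ≤ ENNReal.ofReal (C * μ ^ (3 + q2 / q1 - 2 * q2)) := by
  have hq1' : 1 < q1 := by
    have ha : 0 < 1/q2 := by positivity
    have hb : 1/q1 < 1 := by linarith
    rwa [div_lt_one hq1] at hb
  have hq2' : 1 < q2 := by
    have ha : 0 < 1/q1 := by positivity
    have hb : 1/q2 < 1 := by linarith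
    rwa [div_lt_one hq2] at hb
  have key1 : 2*q1*q2 < q2 + 3*q1 := by
    have hx : (2*q1) * (2*q2) * (1/(2*q1) + 3/(2*q2)) = 2*q2 + 6*q1 := by
      field_simp; ring
    have h := mul_lt_mul_of_pos_left h1 (show (0:ℝ) < (2*q1)*(2*q2) by positivity)
    rw [mul_one, hx] at h
    linarith
  have key2 : q1 + q2 < q1*q2 := by
    have hx : (q1*q2) * (1/q1 + 1/q2) = q2 + q1 := by field_simp
    have h := mul_lt_mul_of_pos_left hQ (show (0:ℝ) < q1*q2 by positivity)
    rw [mul_one, hx] at h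
    linarith
  obtain ⟨ee, hee_def⟩ : ∃ x : ℝ, x = 3 + q2 / q1 - 2 * q2 := ⟨_, rfl⟩
  rw [← hee_def]
  have heq : ee = (3*q1 + q2 - 2*q1*q2)/q1 := by rw [hee_def]; field_simp
  have he : 0 < ee := by rw [heq]; exact div_pos (by linarith) hq1
  have hp1 : q1/q2 - 2*q1 < -1 := by
    have hx : q1/q2 - 2*q1 + 1 = (q1 + q2 - 2*q1*q2)/q2 := by field_simp; ring
    have hneg : (q1 + q2 - 2*q1*q2)/q2 < 0 :=
      div_neg_of_neg_of_pos (by nlinarith [mul_pos hq1 hq2]) hq2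
    have h' : q1/q2 - 2*q1 + 1 < 0 := by rw [hx]; exact hneg
    linarith
  have hcb : (0:ℝ) < 1 + 1/(2*q2 - 1) := by
    have h : (0:ℝ) < 2*q2-1 := by linarith
    positivity
  have hd : (0:ℝ) < 2*q1 - q1/q2 - 1 := by linarith
  have hC0 : (0:ℝ) < (1 + 1/(2*q2-1)) * (1 + 1/(2*q1 - q1/q2 - 1)) := by positivity
  refine ⟨(1 + 1/(2*q2-1)) * (1 + 1/(2*q1 - q1/q2 - 1)) * (2/ee)^2, fun μ hμ => ?_⟩
  have hμ1 : (1:ℝ) ≤ μ := by linarith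
  have hμ0 : (0:ℝ) < μ := by linarith
  have hr1 : (-1:ℝ) < -(1 - ee/2) := by linarith
  have hK1 : (∫⁻ s in Ioc (1:ℝ) μ, ENNReal.ofReal (s ^ (-(1 - ee/2))))
      = ENNReal.ofReal ((μ ^ (ee/2) - 1)/(ee/2)) := by
    rw [lint_Ioc_rpow hμ1 hr1, show -(1 - ee/2) + 1 = ee/2 by ring]
  have hK1ne : (∫⁻ s in Ioc (1:ℝ) μ, ENNReal.ofReal (s ^ (-(1 - ee/2)))) ≠ ⊤ := by
    rw [hK1]; exact ENNReal.ofReal_ne_top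
  have hstepD : ∀ s : ℝ, 1 ≤ s →
      ∫⁻ u in Ioi (0:ℝ), ∫⁻ v in Ioi (0:ℝ), gg q1 q2 s u v ^ 2
        ≤ ENNReal.ofReal ((1 + 1/(2*q2-1)) * (1 + 1/(2*q1 - q1/q2 - 1)) * s ^ (ee - 2)) := by
    intro s hs
    have h := stepD hq1' hq2' hp1 hs
    rwa [show (1:ℝ) - 2*q2 + q2/q1 = ee - 2 by rw [hee_def]; ring] at h
  calc ∫⁻ u in Ioi (0:ℝ), ∫⁻ v in Ioi (0:ℝ),
        ENNReal.ofReal ((∫ t in Ioc (0:ℝ) 1, ∫ s in Ioc (1:ℝ) μ,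
          rho q1 q2 (t + u) (s + v)) ^ 2)
      ≤ ∫⁻ u in Ioi (0:ℝ), ∫⁻ v in Ioi (0:ℝ),
          (∫⁻ s in Ioc (1:ℝ) μ, ENNReal.ofReal (s ^ (-(1 - ee/2))))
          * ∫⁻ s in Ioc (1:ℝ) μ, ENNReal.ofReal (s ^ (1 - ee/2)) * gg q1 q2 s u v ^ 2 := by
        refine lintegral_mono_ae ((ae_restrict_mem measurableSet_Ioi).mono fun u hu => ?_)
        refine lintegral_mono_ae ((ae_restrict_mem measurableSet_Ioi).mono fun v hv => ?_)
        exact (stepA hq1 hq2 hu hv).trans (stepB q1 q2 u v μ (1 - ee/2))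
    _ = (∫⁻ s in Ioc (1:ℝ) μ, ENNReal.ofReal (s ^ (-(1 - ee/2))))
          * ∫⁻ u in Ioi (0:ℝ), ∫⁻ v in Ioi (0:ℝ), ∫⁻ s in Ioc (1:ℝ) μ,
              ENNReal.ofReal (s ^ (1 - ee/2)) * gg q1 q2 s u v ^ 2 := by
        rw [← lintegral_const_mul' _ _ hK1ne]
        exact lintegral_congr fun u => lintegral_const_mul' _ _ hK1ne
    _ = (∫⁻ s in Ioc (1:ℝ) μ, ENNReal.ofReal (s ^ (-(1 - ee/2))))
          * ∫⁻ s in Ioc (1:ℝ) μ, ENNReal.ofReal (s ^ (1 - ee/2))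
              * ∫⁻ u in Ioi (0:ℝ), ∫⁻ v in Ioi (0:ℝ), gg q1 q2 s u v ^ 2 := by
        rw [swap3 q1 q2 (1 - ee/2) μ]
    _ ≤ (∫⁻ s in Ioc (1:ℝ) μ, ENNReal.ofReal (s ^ (-(1 - ee/2))))
          * ∫⁻ s in Ioc (1:ℝ) μ, ENNReal.ofReal (s ^ (1 - ee/2))
              * ENNReal.ofReal ((1 + 1/(2*q2-1)) * (1 + 1/(2*q1 - q1/q2 - 1)) * s ^ (ee - 2)) := by
        refine mul_le_mul_right (lintegral_mono_ae
          ((ae_restrict_mem measurableSet_Ioc).mono fun s hs => ?_)) _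
        exact mul_le_mul_right (hstepD s hs.1.le) _
    _ = (∫⁻ s in Ioc (1:ℝ) μ, ENNReal.ofReal (s ^ (-(1 - ee/2))))
          * (ENNReal.ofReal ((1 + 1/(2*q2-1)) * (1 + 1/(2*q1 - q1/q2 - 1)))
              * ∫⁻ s in Ioc (1:ℝ) μ, ENNReal.ofReal (s ^ (-(1 - ee/2)))) := by
        congr 1
        rw [← lintegral_const_mul' _ _ ENNReal.ofReal_ne_top]
        refine lintegral_congr_ae ((ae_restrict_mem measurableSet_Ioc).mono fun s hs => ?_)
        have hs0 : (0:ℝ) < s := lt_trans one_pos hs.1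
        show ENNReal.ofReal (s ^ (1 - ee/2))
            * ENNReal.ofReal ((1 + 1/(2*q2-1)) * (1 + 1/(2*q1 - q1/q2 - 1)) * s ^ (ee - 2))
          = ENNReal.ofReal ((1 + 1/(2*q2-1)) * (1 + 1/(2*q1 - q1/q2 - 1)))
            * ENNReal.ofReal (s ^ (-(1 - ee/2)))
        rw [← ENNReal.ofReal_mul (Real.rpow_nonneg hs0.le _), ← ENNReal.ofReal_mul hC0.le]
        congr 1
        rw [show -(1 - ee/2) = (1 - ee/2) + (ee - 2) by ring, Real.rpow_add hs0]
        ring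
    _ ≤ ENNReal.ofReal ((1 + 1/(2*q2-1)) * (1 + 1/(2*q1 - q1/q2 - 1)) * (2/ee)^2 * μ ^ ee) := by
        rw [hK1]
        have hX1 : (1:ℝ) ≤ μ ^ (ee/2) := Real.one_le_rpow hμ1 (by positivity)
        have hk0 : 0 ≤ (μ ^ (ee/2) - 1)/(ee/2) := div_nonneg (by linarith) (by positivity)
        have hkle : (μ ^ (ee/2) - 1)/(ee/2) ≤ 2/ee * μ ^ (ee/2) := by
          rw [div_le_iff₀ (by positivity : (0:ℝ) < ee/2)]
          have hx : 2/ee * μ ^ (ee/2) * (ee/2) = μ ^ (ee/2) := by field_simp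
          rw [hx]
          linarith
        rw [← ENNReal.ofReal_mul hC0.le, ← ENNReal.ofReal_mul hk0]
        apply ENNReal.ofReal_le_ofReal
        have hxx : μ ^ ee = μ ^ (ee/2) * μ ^ (ee/2) := by
          rw [← Real.rpow_add hμ0]; congr 1; ring
        rw [hxx]
        have hsq := mul_le_mul hkle hkle hk0 (by positivity : (0:ℝ) ≤ 2/ee * μ ^ (ee/2))
        nlinarith [hC0.le, hsq, hk0]
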